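/- Fix an integer n ≥ 1, masses m_1, …, m_n > 0, radii s_1, …, s_n > 0 and λ > 0. Then the following are equivalent: (i) there exists a nonconstant twice differentiable solution z : ℝ → ℝ of z''(t) = −∑_{i=1}^n m_i z(t)/(s_i² + z(t)²)^{3/2} with z(t + 2π/√λ) = z(t) for all t (a synchronous solution, having the same period as the rigid motion of primaries with angular velocity √λ); (ii) there exists c > 0 such that ∑_{i=1}^n m_i (s_i² + c²)^{-3/2} = λ (the pyramidal central configuration condition for a zero mass at height c above the plane); (iii) λ < ∑_{i=1}^n m_i/s_i³. -/

import Mathlib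

open Real Set intervalIntegral MeasureTheory Filter

namespace SitnikovAux



lemma rpow_three_halves (x : ℝ) (hx : 0 ≤ x) : x ^ ((3:ℝ)/2) = Real.sqrt x ^ 3 := by
  rw [Real.sqrt_eq_rpow, ← Real.rpow_natCast (x ^ ((1:ℝ)/2)) 3, ← Real.rpow_mul hx]
  norm_num

lemma rpow_neg_three_halves (x : ℝ) (hx : 0 ≤ x) :
    x ^ (-(3/2) : ℝ) = (Real.sqrt x ^ 3)⁻¹ := by
  rw [← rpow_three_halves x hx, ← Real.rpow_neg hx]

lemma hval0 {n : ℕ} (m s : Fin n → ℝ) (hs : ∀ i, 0 < s i) :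
    ∑ i, m i * (s i ^ 2 + (0:ℝ) ^ 2) ^ (-(3 / 2) : ℝ) = ∑ i, m i / s i ^ 3 := by
  refine Finset.sum_congr rfl fun i _ => ?_
  rw [rpow_neg_three_halves _ (by positivity)]
  rw [show s i ^ 2 + (0:ℝ)^2 = s i ^ 2 by ring, Real.sqrt_sq (hs i).le]
  rw [div_eq_mul_inv]

lemma hlt {n : ℕ} (m s : Fin n → ℝ) (hm : ∀ i, 0 < m i) (hs : ∀ i, 0 < s i)
    (hn : 1 ≤ n) (c : ℝ) (hc : 0 < c) :
    ∑ i, m i * (s i ^ 2 + c ^ 2) ^ (-(3 / 2) : ℝ) < ∑ i, m i / s i ^ 3 := by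
  have : Nonempty (Fin n) := ⟨⟨0, hn⟩⟩
  refine Finset.sum_lt_sum_of_nonempty Finset.univ_nonempty fun i _ => ?_
  have h1 : (s i ^ 2 + c ^ 2) ^ (-(3 / 2) : ℝ) < (s i ^ 2) ^ (-(3 / 2) : ℝ) :=
    Real.rpow_lt_rpow_of_neg (pow_pos (hs i) 2) (by nlinarith) (by norm_num)
  have h2 : (s i ^ 2 : ℝ) ^ (-(3 / 2) : ℝ) = (s i ^ 3)⁻¹ := by
    rw [rpow_neg_three_halves _ (by positivity), Real.sqrt_sq (hs i).le]
  calc m i * (s i ^ 2 + c ^ 2) ^ (-(3 / 2) : ℝ)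
      < m i * (s i ^ 2) ^ (-(3 / 2) : ℝ) := by
        exact mul_lt_mul_of_pos_left h1 (hm i)
    _ = m i / s i ^ 3 := by rw [h2, div_eq_mul_inv]

lemma partA {n : ℕ} (hn : 1 ≤ n) (m s : Fin n → ℝ) (hm : ∀ i, 0 < m i)
    (hs : ∀ i, 0 < s i) (lam : ℝ) (hlam : 0 < lam) :
    (∃ c : ℝ, 0 < c ∧ ∑ i, m i * (s i ^ 2 + c ^ 2) ^ (-(3 / 2) : ℝ) = lam) ↔
      lam < ∑ i, m i / s i ^ 3 := by
  have : Nonempty (Fin n) := ⟨⟨0, hn⟩⟩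
  constructor
  · rintro ⟨c, hc, hsum⟩
    rw [← hsum]
    exact hlt m s hm hs hn c hc
  · intro hμ
    set h : ℝ → ℝ := fun c => ∑ i, m i * (s i ^ 2 + c ^ 2) ^ (-(3 / 2) : ℝ) with hh
    have hcont : Continuous h := by
      apply continuous_finset_sum
      intro i _
      apply Continuous.mul continuous_const
      apply Continuous.rpow_const (by continuity)
      intro x; left; have := hs i; positivity
    set C : ℝ := max 1 ((∑ i, m i) / lam + 1) with hC
    have hC1 : (1:ℝ) ≤ C := le_max_left _ _
    have hC0 : 0 < C := by linarith
    have hCbig : (∑ i, m i) / lam < C ^ 3 := by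
      have h2 : (∑ i, m i) / lam + 1 ≤ C := le_max_right _ _
      have h3 : C ^ 1 ≤ C ^ 3 := pow_le_pow_right₀ hC1 (by norm_num)
      rw [pow_one] at h3
      linarith
    have hhC : h C < lam := by
      have hb : ∀ i ∈ Finset.univ, m i * (s i ^ 2 + C ^ 2) ^ (-(3 / 2) : ℝ)
          ≤ m i * (C ^ 3)⁻¹ := by
        intro i _
        have h1 : (s i ^ 2 + C ^ 2) ^ (-(3 / 2) : ℝ) ≤ (C ^ 2) ^ (-(3 / 2) : ℝ) :=
          Real.rpow_le_rpow_of_nonpos (by positivity) (by nlinarith) (by norm_num)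
        have h2 : ((C:ℝ) ^ 2) ^ (-(3 / 2) : ℝ) = (C ^ 3)⁻¹ := by
          rw [rpow_neg_three_halves _ (by positivity), Real.sqrt_sq hC0.le]
        rw [← h2]
        exact mul_le_mul_of_nonneg_left h1 (hm i).le
      calc h C ≤ ∑ i, m i * (C ^ 3)⁻¹ := Finset.sum_le_sum hb
        _ = (∑ i, m i) * (C ^ 3)⁻¹ := by rw [← Finset.sum_mul]
        _ < lam := by
            rw [mul_inv_lt_iff₀ (by positivity)]
            rw [div_lt_iff₀ hlam] at hCbig
            linarith [hCbig]
    have h0 : h 0 = ∑ i, m i / s i ^ 3 := hval0 m s hs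
    have hivt : lam ∈ h '' (Icc 0 C) := by
      apply intermediate_value_Icc' hC0.le hcont.continuousOn
      constructor
      · exact hhC.le
      · rw [h0]; exact hμ.le
    obtain ⟨c, hcmem, hceq⟩ := hivt
    refine ⟨c, ?_, hceq⟩
    rcases eq_or_lt_of_le hcmem.1 with h' | h'
    · exfalso
      rw [← h'] at hceq
      rw [h0] at hceq
      · exact absurd hceq (ne_of_gt hμ)
    · exact h'


lemma sturm {z q : ℝ → ℝ} (hz : Differentiable ℝ z) (hz' : Differentiable ℝ (deriv z))
    (hODE : ∀ t, deriv (deriv z) t = -(q t) * z t) (hq : Continuous q)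
    {a b μ : ℝ} (hab : a < b) (hμ : 0 < μ)
    (hza : z a = 0) (hzb : z b = 0)
    (hpos : ∀ t ∈ Ioo a b, 0 < z t) (hqlt : ∀ t ∈ Ioo a b, q t < μ) :
    Real.pi / Real.sqrt μ < b - a := by
  by_contra hle
  push_neg at hle
  have hba : 0 < b - a := sub_pos.2 hab
  set ω : ℝ := Real.pi / (b - a) with hωdef
  have hω : 0 < ω := div_pos Real.pi_pos hba
  have hωba : ω * (b - a) = Real.pi := div_mul_cancel₀ _ hba.ne'
  have hsμ : 0 < Real.sqrt μ := Real.sqrt_pos.2 hμ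
  have hω2 : μ ≤ ω ^ 2 := by
    have h1 : Real.sqrt μ ≤ ω := by
      rw [hωdef, le_div_iff₀ hba]
      rw [le_div_iff₀ hsμ] at hle
      rw [mul_comm]
      exact hle
    calc μ = Real.sqrt μ ^ 2 := (Real.sq_sqrt hμ.le).symm
      _ ≤ ω ^ 2 := by nlinarith
  set u : ℝ → ℝ := fun t => Real.sin (ω * (t - a)) with hu
  set W : ℝ → ℝ := fun t => z t * (ω * Real.cos (ω * (t - a))) - deriv z t * u t with hW
  have hz'' : ∀ t, HasDerivAt (deriv z) (-(q t) * z t) t := by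
    intro t
    have h := (hz' t).hasDerivAt
    rwa [hODE t] at h
  have hlin : ∀ t : ℝ, HasDerivAt (fun τ => ω * (τ - a)) ω t := by
    intro t
    simpa using ((hasDerivAt_id t).sub_const a).const_mul ω
  have hud : ∀ t, HasDerivAt u (ω * Real.cos (ω * (t - a))) t := by
    intro t
    have := (Real.hasDerivAt_sin (ω * (t - a))).comp t (hlin t)
    exact this.congr_deriv (by ring)
  have hcd : ∀ t, HasDerivAt (fun τ => ω * Real.cos (ω * (τ - a))) (-(ω ^ 2) * u t) t := by
    intro t
    have := ((Real.hasDerivAt_cos (ω * (t - a))).comp t (hlin t)).const_mul ω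
    refine this.congr_deriv ?_
    simp [hu]
    ring
  have hWd : ∀ t, HasDerivAt W ((q t - ω ^ 2) * (z t * u t)) t := by
    intro t
    have h1 := ((hz t).hasDerivAt.mul (hcd t)).sub ((hz'' t).mul (hud t))
    refine h1.congr_deriv ?_
    simp only [hu]
    ring
  have hcontu : Continuous u := by
    apply Real.continuous_sin.comp
    continuity
  have hcontW' : Continuous fun t => (q t - ω ^ 2) * (z t * u t) :=
    (hq.sub continuous_const).mul (hz.continuous.mul hcontu)
  have hFTC : (∫ t in a..b, (q t - ω ^ 2) * (z t * u t)) = W b - W a :=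
    intervalIntegral.integral_eq_sub_of_hasDerivAt (fun t _ => hWd t)
      (hcontW'.intervalIntegrable a b)
  have hWa : W a = 0 := by simp [hW, hu, hza]
  have hWb : W b = 0 := by
    simp only [hW, hu, hzb, hωba]
    simp [Real.sin_pi]
  have hposint : 0 < ∫ t in a..b, (ω ^ 2 - q t) * (z t * u t) := by
    apply intervalIntegral_pos_of_pos_on
    · exact (((continuous_const.sub hq)).mul
        (hz.continuous.mul hcontu)).intervalIntegrable a b
    · intro t ht
      have h1 : 0 < z t := hpos t ht
      have h2 : q t < μ := hqlt t ht
      have h3 : 0 < u t := by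
        apply Real.sin_pos_of_pos_of_lt_pi
        · exact mul_pos hω (by linarith [ht.1])
        · have h5 : ω * (t - a) < ω * (b - a) := by
            apply mul_lt_mul_of_pos_left _ hω
            linarith [ht.2]
          rwa [hωba] at h5
      have h6 : 0 < ω ^ 2 - q t := by linarith
      exact mul_pos h6 (mul_pos h1 h3)
    · exact hab
  have hneg : (∫ t in a..b, (ω ^ 2 - q t) * (z t * u t))
      = -(W b - W a) := by
    rw [← hFTC, ← intervalIntegral.integral_neg]
    congr 1
    funext t
    ring
  rw [hneg, hWa, hWb] at hposint
  simp at hposint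

lemma next_zero {z : ℝ → ℝ} (hz : Differentiable ℝ z) (hz' : Continuous (deriv z))
    (hne : ∀ t, z t = 0 → deriv z t ≠ 0)
    {t₀ b : ℝ} (h0 : z t₀ = 0) (hd : 0 < deriv z t₀) (htb : t₀ < b) (hb : z b = 0) :
    ∃ t₁ ∈ Ioc t₀ b, z t₁ = 0 ∧ (∀ t ∈ Ioo t₀ t₁, 0 < z t) ∧ deriv z t₁ < 0 := by
  -- find δ > 0 with z > 0 on (t₀, t₀+δ] and t₀ + δ < b
  have hop : IsOpen {t : ℝ | 0 < deriv z t} := isOpen_lt continuous_const hz'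
  obtain ⟨ε, hε, hball⟩ := Metric.isOpen_iff.1 hop t₀ hd
  set δ : ℝ := min (ε / 2) ((b - t₀) / 2) with hδdef
  have hδ : 0 < δ := by
    apply lt_min (by linarith) (by linarith)
  have hδb : t₀ + δ < b := by
    have := min_le_right (ε / 2) ((b - t₀) / 2)
    have h2 : δ ≤ (b - t₀)/2 := this
    linarith
  have hmono : StrictMonoOn z (Icc t₀ (t₀ + δ)) := by
    apply strictMonoOn_of_deriv_pos (convex_Icc _ _) hz.continuous.continuousOn
    intro t ht
    rw [interior_Icc] at ht
    apply hball
    rw [Metric.mem_ball, Real.dist_eq, abs_lt]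
    have hδε : δ ≤ ε / 2 := min_le_left _ _
    constructor <;> [linarith [ht.1]; linarith [ht.2]]
  have hzpos : ∀ t ∈ Ioc t₀ (t₀ + δ), 0 < z t := by
    intro t ht
    have := hmono (left_mem_Icc.2 (by linarith)) ⟨ht.1.le, ht.2⟩ ht.1
    rwa [h0] at this
  set S : Set ℝ := {t ∈ Icc (t₀ + δ) b | z t = 0} with hS
  have hSclosed : IsClosed S :=
    (isClosed_Icc.inter (isClosed_singleton.preimage hz.continuous))
  have hSne : S.Nonempty := ⟨b, ⟨⟨hδb.le, le_refl b⟩, hb⟩⟩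
  have hSbdd : BddBelow S := BddBelow.mono (fun t ht => ht.1) bddBelow_Icc
  set t₁ : ℝ := sInf S with ht₁def
  have ht₁S : t₁ ∈ S := IsClosed.csInf_mem hSclosed hSne hSbdd
  have ht₁mem : t₁ ∈ Icc (t₀ + δ) b := ht₁S.1
  have hzt₁ : z t₁ = 0 := ht₁S.2
  have ht₁gt : t₀ < t₁ := lt_of_lt_of_le (by linarith) ht₁mem.1
  have hposIoo : ∀ t ∈ Ioo t₀ t₁, 0 < z t := by
    intro t ht
    rcases le_or_gt t (t₀ + δ) with h' | h'
    · exact hzpos t ⟨ht.1, h'⟩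
    · by_contra hle
      push_neg at hle
      rcases eq_or_lt_of_le hle with h'' | h''
      · exact absurd (csInf_le hSbdd ⟨⟨h'.le, le_trans ht.2.le ht₁mem.2⟩, h''⟩)
          (not_le.2 ht.2)
      · have hiv : (0:ℝ) ∈ Icc (z t) (z (t₀ + δ)) :=
          ⟨h''.le, (hzpos (t₀+δ) ⟨by linarith, le_refl _⟩).le⟩
        obtain ⟨r, hr, hrz⟩ := intermediate_value_Icc' h'.le
          hz.continuous.continuousOn hiv
        have : t₁ ≤ r := csInf_le hSbdd ⟨⟨hr.1, by linarith [hr.2, ht.2, ht₁mem.2]⟩, hrz⟩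
        linarith [hr.2, ht.2]
  have hdneg : deriv z t₁ < 0 := by
    rcases lt_or_gt_of_ne (hne t₁ hzt₁) with h' | h'
    · exact h'
    · exfalso
      obtain ⟨ε₂, hε₂, hball₂⟩ := Metric.isOpen_iff.1 hop t₁ h'
      have hmono₂ : StrictMonoOn z (Icc (t₁ - ε₂/2) t₁) := by
        apply strictMonoOn_of_deriv_pos (convex_Icc _ _) hz.continuous.continuousOn
        intro t ht
        rw [interior_Icc] at ht
        apply hball₂
        rw [Metric.mem_ball, Real.dist_eq, abs_lt]
        constructor <;> [linarith [ht.1]; linarith [ht.2]]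
      set t : ℝ := max (t₁ - ε₂/2) ((t₀ + t₁)/2) with htdef
      have ht1 : t < t₁ := max_lt (by linarith) (by linarith)
      have ht0 : t₀ < t := lt_of_lt_of_le (by linarith) (le_max_right _ _)
      have htmem : t ∈ Icc (t₁ - ε₂/2) t₁ := ⟨le_max_left _ _, ht1.le⟩
      have := hmono₂ htmem (right_mem_Icc.2 (by linarith)) ht1
      rw [hzt₁] at this
      exact absurd (hposIoo t ⟨ht0, ht1⟩) (not_lt.2 this.le)
  exact ⟨t₁, ⟨ht₁gt, ht₁mem.2⟩, hzt₁, hposIoo, hdneg⟩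


lemma rpow_three_halves' (x : ℝ) (hx : 0 ≤ x) : x ^ ((3:ℝ)/2) = Real.sqrt x ^ 3 := by
  rw [Real.sqrt_eq_rpow, ← Real.rpow_natCast (x ^ ((1:ℝ)/2)) 3, ← Real.rpow_mul hx]
  norm_num

lemma energy_hasDeriv {n : ℕ} (m s : Fin n → ℝ) (hs : ∀ i, 0 < s i) {z : ℝ → ℝ}
    (hz : Differentiable ℝ z) (hz' : Differentiable ℝ (deriv z))
    (hODE : ∀ t : ℝ, deriv (deriv z) t =
      -∑ i, m i * z t / (s i ^ 2 + z t ^ 2) ^ ((3 : ℝ) / 2)) (t : ℝ) :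
    HasDerivAt (fun τ => deriv z τ ^ 2 / 2 - ∑ i, m i / Real.sqrt (s i ^ 2 + z τ ^ 2)) 0 t := by
  have hzt : HasDerivAt z (deriv z t) t := (hz t).hasDerivAt
  have hz't : HasDerivAt (deriv z) (deriv (deriv z) t) t := (hz' t).hasDerivAt
  have h1 : HasDerivAt (fun τ => deriv z τ ^ 2 / 2)
      (deriv z t * deriv (deriv z) t) t := by
    have := (hz't.pow 2).div_const 2
    refine this.congr_deriv ?_
    ring
  have h2 : ∀ i ∈ Finset.univ, HasDerivAt (fun τ => m i / Real.sqrt (s i ^ 2 + z τ ^ 2))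
      (-(m i * z t * deriv z t / Real.sqrt (s i ^ 2 + z t ^ 2) ^ 3)) t := by
    intro i _
    have hw : HasDerivAt (fun τ => s i ^ 2 + z τ ^ 2) (2 * z t ^ 1 * deriv z t) t :=
      (hzt.pow 2).const_add (s i ^ 2)
    have hwpos : 0 < s i ^ 2 + z t ^ 2 := by have := hs i; positivity
    have hsq : HasDerivAt (fun τ => Real.sqrt (s i ^ 2 + z τ ^ 2))
        (2 * z t ^ 1 * deriv z t / (2 * Real.sqrt (s i ^ 2 + z t ^ 2))) t :=
      hw.sqrt hwpos.ne'
    have hsqrtpos : 0 < Real.sqrt (s i ^ 2 + z t ^ 2) := Real.sqrt_pos.2 hwpos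
    have h3 : Real.sqrt (s i ^ 2 + z t ^ 2) ^ 3
        = (s i ^ 2 + z t ^ 2) * Real.sqrt (s i ^ 2 + z t ^ 2) := by
      rw [pow_succ, Real.sq_sqrt hwpos.le]
    have := (hasDerivAt_const t (m i)).div hsq hsqrtpos.ne'
    refine this.congr_deriv ?_
    rw [Real.sq_sqrt hwpos.le, h3]
    field_simp
    ring
  have hsum := HasDerivAt.fun_sum h2
  have htot := h1.sub hsum
  refine htot.congr_deriv ?_
  have hrw : ∑ i, m i * z t / (s i ^ 2 + z t ^ 2) ^ ((3:ℝ)/2)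
      = ∑ i, m i * z t / Real.sqrt (s i ^ 2 + z t ^ 2) ^ 3 :=
    Finset.sum_congr rfl fun i _ => by
      rw [rpow_three_halves' _ (by have := hs i; positivity)]
  have hng : ∑ i, -(m i * z t * deriv z t / Real.sqrt (s i ^ 2 + z t ^ 2) ^ 3)
      = -∑ i, m i * z t * deriv z t / Real.sqrt (s i ^ 2 + z t ^ 2) ^ 3 := by
    simp
  have hS : ∑ i, m i * z t * deriv z t / Real.sqrt (s i ^ 2 + z t ^ 2) ^ 3
      = deriv z t * ∑ i, m i * z t / Real.sqrt (s i ^ 2 + z t ^ 2) ^ 3 := by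
    rw [Finset.mul_sum]
    exact Finset.sum_congr rfl fun i _ => by ring
  rw [hODE t, hrw, hng, hS]
  ring

lemma energy_const {n : ℕ} (m s : Fin n → ℝ) (hs : ∀ i, 0 < s i) {z : ℝ → ℝ}
    (hz : Differentiable ℝ z) (hz' : Differentiable ℝ (deriv z))
    (hODE : ∀ t : ℝ, deriv (deriv z) t =
      -∑ i, m i * z t / (s i ^ 2 + z t ^ 2) ^ ((3 : ℝ) / 2)) (t t' : ℝ) :
    deriv z t ^ 2 / 2 - ∑ i, m i / Real.sqrt (s i ^ 2 + z t ^ 2)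
      = deriv z t' ^ 2 / 2 - ∑ i, m i / Real.sqrt (s i ^ 2 + z t' ^ 2) := by
  have hE := fun x => energy_hasDeriv m s hs hz hz' hODE x
  exact is_const_of_deriv_eq_zero (fun x => (hE x).differentiableAt)
    (fun x => (hE x).deriv) t t'

lemma deriv_ne_at_zero {n : ℕ} (m s : Fin n → ℝ) (hm : ∀ i, 0 < m i) (hs : ∀ i, 0 < s i)
    {z : ℝ → ℝ}
    (hz : Differentiable ℝ z) (hz' : Differentiable ℝ (deriv z))
    (hODE : ∀ t : ℝ, deriv (deriv z) t =
      -∑ i, m i * z t / (s i ^ 2 + z t ^ 2) ^ ((3 : ℝ) / 2))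
    (hnc : ∃ t₁ t₂ : ℝ, z t₁ ≠ z t₂) :
    ∀ t₀, z t₀ = 0 → deriv z t₀ ≠ 0 := by
  intro t₀ hz0 hd0
  obtain ⟨t₁, t₂, hne⟩ := hnc
  apply hne
  have hc : ∀ t, deriv z t = 0 := by
    intro t
    have hE := energy_const m s hs hz hz' hODE t t₀
    rw [hz0, hd0] at hE
    have hle : ∀ i ∈ Finset.univ, m i / Real.sqrt (s i ^ 2 + z t ^ 2) ≤
        m i / Real.sqrt (s i ^ 2 + (0:ℝ) ^ 2) := by
      intro i _
      have hsi := hs i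
      apply div_le_div_of_nonneg_left (hm i).le
      · apply Real.sqrt_pos.2; positivity
      · apply Real.sqrt_le_sqrt; nlinarith [sq_nonneg (z t)]
    have hsumle := Finset.sum_le_sum hle
    have : deriv z t ^ 2 / 2 ≤ 0 := by linarith
    nlinarith [sq_nonneg (deriv z t)]
  exact is_const_of_deriv_eq_zero hz hc t₁ t₂

lemma deriv_periodic {z : ℝ → ℝ} (hz : Differentiable ℝ z) {T : ℝ}
    (hper : ∀ t, z (t + T) = z t) : ∀ t, deriv z (t + T) = deriv z t := by
  intro t
  have h : (fun τ => z (τ + T)) = z := funext hper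
  conv_rhs => rw [← h]
  rw [deriv_comp_add_const]

lemma exists_zero {n : ℕ} (hn : 1 ≤ n) (m s : Fin n → ℝ) (hm : ∀ i, 0 < m i)
    (hs : ∀ i, 0 < s i) {z : ℝ → ℝ}
    (hz : Differentiable ℝ z) (hz' : Differentiable ℝ (deriv z))
    (hODE : ∀ t : ℝ, deriv (deriv z) t =
      -∑ i, m i * z t / (s i ^ 2 + z t ^ 2) ^ ((3 : ℝ) / 2))
    {T : ℝ} (hT : 0 < T) (hper : ∀ t, z (t + T) = z t) :
    ∃ t₀, z t₀ = 0 := by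
  have : Nonempty (Fin n) := ⟨⟨0, hn⟩⟩
  by_contra hno
  push_neg at hno
  have hsign : (∀ t, 0 < z t) ∨ (∀ t, z t < 0) := by
    rcases lt_or_gt_of_ne (hno 0) with h0 | h0
    · right
      intro t
      rcases lt_or_gt_of_ne (hno t) with h | h
      · exact h
      · exfalso
        obtain ⟨r, _, hr⟩ := intermediate_value_uIcc (a := (0:ℝ)) (b := t)
          hz.continuous.continuousOn
          (show (0:ℝ) ∈ uIcc (z 0) (z t) by
            rw [Set.mem_uIcc]; left; exact ⟨h0.le, h.le⟩)
        exact hno r hr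
    · left
      intro t
      rcases lt_or_gt_of_ne (hno t) with h | h
      · exfalso
        obtain ⟨r, _, hr⟩ := intermediate_value_uIcc (a := (0:ℝ)) (b := t)
          hz.continuous.continuousOn
          (show (0:ℝ) ∈ uIcc (z 0) (z t) by
            rw [Set.mem_uIcc]; right; exact ⟨h.le, h0.le⟩)
        exact hno r hr
      · exact h
  have hdp := deriv_periodic hz hper 0
  rcases hsign with hpos | hneg
  · have hdd : ∀ t, deriv (deriv z) t < 0 := by
      intro t
      rw [hODE t]
      rw [neg_lt, neg_zero]
      apply Finset.sum_pos _ Finset.univ_nonempty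
      intro i _
      have hwpos : (0:ℝ) < (s i ^ 2 + z t ^ 2) ^ ((3:ℝ)/2) := by
        apply Real.rpow_pos_of_pos; have := hs i; positivity
      exact div_pos (mul_pos (hm i) (hpos t)) hwpos
    have hanti : StrictAnti (deriv z) := strictAnti_of_deriv_neg hdd
    have := hanti (show (0:ℝ) < 0 + T by linarith)
    rw [hdp] at this
    exact lt_irrefl _ this
  · have hdd : ∀ t, 0 < deriv (deriv z) t := by
      intro t
      rw [hODE t]
      rw [neg_pos]
      apply Finset.sum_neg _ Finset.univ_nonempty
      intro i _
      have hwpos : (0:ℝ) < (s i ^ 2 + z t ^ 2) ^ ((3:ℝ)/2) := by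
        apply Real.rpow_pos_of_pos; have := hs i; positivity
      exact div_neg_of_neg_of_pos (by nlinarith [hm i, hneg t]) hwpos
    have hmono : StrictMono (deriv z) := strictMono_of_deriv_pos hdd
    have := hmono (show (0:ℝ) < 0 + T by linarith)
    rw [hdp] at this
    exact lt_irrefl _ this


lemma q_lt_mu {n : ℕ} (hn : 1 ≤ n) (m s : Fin n → ℝ) (hm : ∀ i, 0 < m i)
    (hs : ∀ i, 0 < s i) (c : ℝ) (hc : c ≠ 0) :
    ∑ i, m i * (s i ^ 2 + c ^ 2) ^ (-(3 / 2) : ℝ) < ∑ i, m i / s i ^ 3 := by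
  have : Nonempty (Fin n) := ⟨⟨0, hn⟩⟩
  have hc2 : 0 < c ^ 2 := lt_of_le_of_ne (sq_nonneg c) (Ne.symm (pow_ne_zero 2 hc))
  refine Finset.sum_lt_sum_of_nonempty Finset.univ_nonempty fun i _ => ?_
  have h1 : (s i ^ 2 + c ^ 2) ^ (-(3 / 2) : ℝ) < (s i ^ 2) ^ (-(3 / 2) : ℝ) :=
    Real.rpow_lt_rpow_of_neg (pow_pos (hs i) 2) (by nlinarith) (by norm_num)
  have h2 : (s i ^ 2 : ℝ) ^ (-(3 / 2) : ℝ) = (s i ^ 3)⁻¹ := by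
    rw [rpow_neg_three_halves _ (by positivity), Real.sqrt_sq (hs i).le]
  calc m i * (s i ^ 2 + c ^ 2) ^ (-(3 / 2) : ℝ)
      < m i * (s i ^ 2) ^ (-(3 / 2) : ℝ) := mul_lt_mul_of_pos_left h1 (hm i)
    _ = m i / s i ^ 3 := by rw [h2, div_eq_mul_inv]

lemma ODE_q_form {n : ℕ} (m s : Fin n → ℝ) (hs : ∀ i, 0 < s i) {z : ℝ → ℝ}
    (hODE : ∀ t : ℝ, deriv (deriv z) t =
      -∑ i, m i * z t / (s i ^ 2 + z t ^ 2) ^ ((3 : ℝ) / 2)) :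
    ∀ t : ℝ, deriv (deriv z) t =
      -(∑ i, m i * (s i ^ 2 + z t ^ 2) ^ (-(3 / 2) : ℝ)) * z t := by
  intro t
  rw [hODE t, neg_mul, neg_inj, Finset.sum_mul]
  refine Finset.sum_congr rfl fun i _ => ?_
  have hw : (0:ℝ) < s i ^ 2 + z t ^ 2 := by have := hs i; positivity
  rw [show (-(3/2) : ℝ) = -((3:ℝ)/2) by norm_num, Real.rpow_neg hw.le]
  field_simp

lemma period_gt {n : ℕ} (hn : 1 ≤ n) (m s : Fin n → ℝ) (hm : ∀ i, 0 < m i)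
    (hs : ∀ i, 0 < s i) {z : ℝ → ℝ}
    (hz : Differentiable ℝ z) (hz' : Differentiable ℝ (deriv z))
    (hODE : ∀ t : ℝ, deriv (deriv z) t =
      -∑ i, m i * z t / (s i ^ 2 + z t ^ 2) ^ ((3 : ℝ) / 2))
    {T : ℝ} (hT : 0 < T) (hper : ∀ t, z (t + T) = z t)
    (hne : ∀ t, z t = 0 → deriv z t ≠ 0)
    {t₀ : ℝ} (h0 : z t₀ = 0) (hd : 0 < deriv z t₀) :
    2 * Real.pi / Real.sqrt (∑ i, m i / s i ^ 3) < T := by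
  have : Nonempty (Fin n) := ⟨⟨0, hn⟩⟩
  set μ : ℝ := ∑ i, m i / s i ^ 3 with hμdef
  have hμ : 0 < μ := Finset.sum_pos (fun i _ => div_pos (hm i) (pow_pos (hs i) 3))
    Finset.univ_nonempty
  set q : ℝ → ℝ := fun t => ∑ i, m i * (s i ^ 2 + z t ^ 2) ^ (-(3 / 2) : ℝ) with hqdef
  have hqODE : ∀ t : ℝ, deriv (deriv z) t = -(q t) * z t := ODE_q_form m s hs hODE
  have hqcont : Continuous q := by
    apply continuous_finset_sum
    intro i _
    apply Continuous.mul continuous_const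
    apply Continuous.rpow_const (continuous_const.add (hz.continuous.pow 2))
    intro x; left; have := hs i; exact (by positivity : (0:ℝ) < s i ^ 2 + z x ^ 2).ne'
  have hqlt : ∀ t, z t ≠ 0 → q t < μ := fun t ht => q_lt_mu hn m s hm hs (z t) ht
  set b : ℝ := t₀ + T with hbdef
  have hzb : z b = 0 := by rw [hbdef, hper t₀, h0]
  have hdb : 0 < deriv z b := by rw [hbdef, deriv_periodic hz hper t₀]; exact hd
  have hcont' : Continuous (deriv z) := hz'.continuous
  obtain ⟨t₁, ht₁mem, hzt₁, hpos₁, hd₁⟩ := next_zero hz hcont' hne h0 hd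
    (show t₀ < b by rw [hbdef]; linarith) hzb
  have ht₁b : t₁ < b := lt_of_le_of_ne ht₁mem.2 (fun hEq => by
    rw [hEq] at hd₁; linarith)
  -- second interval with -z
  set zn : ℝ → ℝ := fun t => -z t with hzn
  have hzn_diff : Differentiable ℝ zn := hz.neg
  have hdzn : deriv zn = fun t => -deriv z t := by
    funext t
    exact deriv.neg
  have hzn_cont' : Continuous (deriv zn) := by rw [hdzn]; exact hcont'.neg
  have hzn_ne : ∀ t, zn t = 0 → deriv zn t ≠ 0 := by
    intro t h
    rw [hdzn]
    simp only [hzn, neg_eq_zero] at h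
    simpa using hne t h
  have hznt₁ : zn t₁ = 0 := by simp [hzn, hzt₁]
  have hdznt₁ : 0 < deriv zn t₁ := by rw [hdzn]; simpa using hd₁
  have hznb : zn b = 0 := by simp [hzn, hzb]
  obtain ⟨t₂, ht₂mem, hznt₂, hpos₂, _⟩ := next_zero hzn_diff hzn_cont' hzn_ne
    hznt₁ hdznt₁ ht₁b hznb
  -- Sturm on both intervals
  have hODEn : ∀ t : ℝ, deriv (deriv zn) t = -(q t) * zn t := by
    intro t
    rw [hdzn]
    rw [show deriv (fun t => -deriv z t) t = -deriv (deriv z) t from deriv.neg]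
    rw [hqODE t]
    simp [hzn]
  have hzn' : Differentiable ℝ (deriv zn) := by rw [hdzn]; exact hz'.neg
  have hs₁ : Real.pi / Real.sqrt μ < t₁ - t₀ := by
    apply sturm hz hz' hqODE hqcont ht₁mem.1 hμ h0 hzt₁ hpos₁
    intro t ht
    exact hqlt t (ne_of_gt (hpos₁ t ht))
  have hs₂ : Real.pi / Real.sqrt μ < t₂ - t₁ := by
    apply sturm hzn_diff hzn' hODEn hqcont ht₂mem.1 hμ hznt₁ hznt₂ hpos₂
    intro t ht
    have hzt : 0 < zn t := hpos₂ t ht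
    simp only [hzn] at hzt
    refine hqlt t fun h6 => ?_
    rw [h6] at hzt
    norm_num at hzt
  have ht₂b : t₂ ≤ b := ht₂mem.2
  have : 2 * Real.pi / Real.sqrt μ = Real.pi / Real.sqrt μ + Real.pi / Real.sqrt μ := by
    ring
  rw [this]
  have : t₂ - t₀ ≤ T := by rw [hbdef] at ht₂b; linarith
  linarith

lemma partB {n : ℕ} (hn : 1 ≤ n) (m s : Fin n → ℝ) (hm : ∀ i, 0 < m i)
    (hs : ∀ i, 0 < s i) (lam : ℝ) (hlam : 0 < lam) {z : ℝ → ℝ}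
    (hz : Differentiable ℝ z) (hz' : Differentiable ℝ (deriv z))
    (hODE : ∀ t : ℝ, deriv (deriv z) t =
      -∑ i, m i * z t / (s i ^ 2 + z t ^ 2) ^ ((3 : ℝ) / 2))
    (hnc : ∃ t₁ t₂ : ℝ, z t₁ ≠ z t₂)
    (hper : ∀ t, z (t + 2 * Real.pi / Real.sqrt lam) = z t) :
    lam < ∑ i, m i / s i ^ 3 := by
  have : Nonempty (Fin n) := ⟨⟨0, hn⟩⟩
  set μ : ℝ := ∑ i, m i / s i ^ 3 with hμdef
  have hμ : 0 < μ := Finset.sum_pos (fun i _ => div_pos (hm i) (pow_pos (hs i) 3))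
    Finset.univ_nonempty
  set T : ℝ := 2 * Real.pi / Real.sqrt lam with hTdef
  have hslam : 0 < Real.sqrt lam := Real.sqrt_pos.2 hlam
  have hT : 0 < T := by
    apply div_pos _ hslam
    linarith [Real.pi_pos]
  have hne := deriv_ne_at_zero m s hm hs hz hz' hODE hnc
  obtain ⟨t₀, ht₀⟩ := exists_zero hn m s hm hs hz hz' hODE hT hper
  have hkey : 2 * Real.pi / Real.sqrt μ < T := by
    rcases lt_or_gt_of_ne (hne t₀ ht₀) with hd | hd
    · -- use -z
      set zn : ℝ → ℝ := fun t => -z t with hzn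
      have hzn_diff : Differentiable ℝ zn := hz.neg
      have hdzn : deriv zn = fun t => -deriv z t := funext fun t => deriv.neg
      have hzn' : Differentiable ℝ (deriv zn) := by rw [hdzn]; exact hz'.neg
      have hODEn : ∀ t : ℝ, deriv (deriv zn) t =
          -∑ i, m i * zn t / (s i ^ 2 + zn t ^ 2) ^ ((3 : ℝ) / 2) := by
        intro t
        rw [hdzn, show deriv (fun t => -deriv z t) t = -deriv (deriv z) t from deriv.neg,
          hODE t]
        simp only [hzn, neg_neg, neg_sq]
        rw [← Finset.sum_neg_distrib]
        refine Finset.sum_congr rfl fun i _ => by ring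
      have hzn_ne : ∀ t, zn t = 0 → deriv zn t ≠ 0 := by
        intro t h
        rw [hdzn]
        simp only [hzn, neg_eq_zero] at h
        simpa using hne t h
      have hzn_per : ∀ t, zn (t + T) = zn t := fun t => by simp [hzn, hper t]
      have h0n : zn t₀ = 0 := by simp [hzn, ht₀]
      have hdn : 0 < deriv zn t₀ := by rw [hdzn]; simpa using hd
      exact period_gt hn m s hm hs hzn_diff hzn' hODEn hT hzn_per hzn_ne h0n hdn
    · exact period_gt hn m s hm hs hz hz' hODE hT hper hne ht₀ hd
  have hsμ : 0 < Real.sqrt μ := Real.sqrt_pos.2 hμ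
  rw [hTdef] at hkey
  rw [div_lt_div_iff₀ hsμ hslam] at hkey
  have h2π : 0 < 2 * Real.pi := by linarith [Real.pi_pos]
  have hlt : Real.sqrt lam < Real.sqrt μ := by
    nlinarith
  rwa [Real.sqrt_lt_sqrt_iff hlam.le] at hlt



lemma rpow_three_halvesX (x : ℝ) (hx : 0 ≤ x) : x ^ ((3:ℝ)/2) = Real.sqrt x ^ 3 := by
  rw [Real.sqrt_eq_rpow, ← Real.rpow_natCast (x ^ ((1:ℝ)/2)) 3, ← Real.rpow_mul hx]
  norm_num

lemma rpow_neg_three_halvesX (x : ℝ) (hx : 0 ≤ x) :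
    x ^ (-(3/2) : ℝ) = (Real.sqrt x ^ 3)⁻¹ := by
  rw [← rpow_three_halvesX x hx, ← Real.rpow_neg hx]

noncomputable def Aa (s a θ : ℝ) : ℝ := Real.sqrt (s ^ 2 + a ^ 2 * Real.sin θ ^ 2)

noncomputable def Ba (s a : ℝ) : ℝ := Real.sqrt (s ^ 2 + a ^ 2)

noncomputable def Phi2 {n : ℕ} (m s : Fin n → ℝ) (a θ : ℝ) : ℝ :=
  ∑ i, 2 * m i / (Aa (s i) a θ * Ba (s i) a * (Aa (s i) a θ + Ba (s i) a))

noncomputable def Phi {n : ℕ} (m s : Fin n → ℝ) (a θ : ℝ) : ℝ :=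
  Real.sqrt (Phi2 m s a θ)

section Bounds

variable {n : ℕ} (m s : Fin n → ℝ)

lemma Aa_pos {si : ℝ} (hsi : 0 < si) (a θ : ℝ) : 0 < Aa si a θ :=
  Real.sqrt_pos.2 (by positivity)

lemma Ba_pos {si : ℝ} (hsi : 0 < si) (a : ℝ) : 0 < Ba si a :=
  Real.sqrt_pos.2 (by positivity)

lemma Aa_ge {si : ℝ} (hsi : 0 < si) (a θ : ℝ) : si ≤ Aa si a θ := by
  apply (Real.le_sqrt' hsi).2
  nlinarith [sq_nonneg (a * Real.sin θ)]

lemma Ba_ge_s {si : ℝ} (hsi : 0 < si) (a : ℝ) : si ≤ Ba si a := by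
  apply (Real.le_sqrt' hsi).2
  nlinarith [sq_nonneg a]

lemma Ba_ge_a {si : ℝ} (hsi : 0 < si) {a : ℝ} (ha : 0 ≤ a) : a ≤ Ba si a := by
  rcases eq_or_lt_of_le ha with h | h
  · rw [← h]; exact (Real.sqrt_pos.2 (by positivity)).le
  · apply (Real.le_sqrt' h).2
    nlinarith

lemma Aa_le_Ba {si : ℝ} (hsi : 0 < si) (a θ : ℝ) : Aa si a θ ≤ Ba si a := by
  apply Real.sqrt_le_sqrt
  nlinarith [sq_nonneg a, Real.sin_sq_le_one θ, sq_nonneg (Real.sin θ)]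

lemma Phi2_pos (hn : 1 ≤ n) (hm : ∀ i, 0 < m i) (hs : ∀ i, 0 < s i) (a θ : ℝ) :
    0 < Phi2 m s a θ := by
  have : Nonempty (Fin n) := ⟨⟨0, hn⟩⟩
  apply Finset.sum_pos _ Finset.univ_nonempty
  intro i _
  have h0 := hm i
  have h1 := Aa_pos (hs i) a θ
  have h2 := Ba_pos (hs i) a
  positivity

lemma Phi2_le_mu (hm : ∀ i, 0 < m i) (hs : ∀ i, 0 < s i) (a θ : ℝ) :
    Phi2 m s a θ ≤ ∑ i, m i / s i ^ 3 := by
  apply Finset.sum_le_sum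
  intro i _
  have h1 := Aa_pos (hs i) a θ
  have h2 := Ba_pos (hs i) a
  have h3 := Aa_ge (hs i) a θ
  have h4 := Ba_ge_s (hs i) a
  have hsi := hs i
  rw [show m i / s i ^ 3 = 2 * m i / (s i * s i * (s i + s i)) by field_simp; ring]
  apply div_le_div_of_nonneg_left (by linarith [(hm i).le]) (by positivity)
  have hAB : s i * s i ≤ Aa (s i) a θ * Ba (s i) a := by nlinarith
  have h5 : s i * s i * (s i + s i) ≤ Aa (s i) a θ * Ba (s i) a * (s i + s i) :=
    mul_le_mul_of_nonneg_right hAB (by linarith)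
  have h6 : Aa (s i) a θ * Ba (s i) a * (s i + s i)
      ≤ Aa (s i) a θ * Ba (s i) a * (Aa (s i) a θ + Ba (s i) a) :=
    mul_le_mul_of_nonneg_left (by linarith) (by positivity)
  linarith

lemma Phi2_ge (hm : ∀ i, 0 < m i) (hs : ∀ i, 0 < s i) (a θ : ℝ) :
    ∑ i, m i * (s i ^ 2 + a ^ 2) ^ (-(3/2) : ℝ) ≤ Phi2 m s a θ := by
  apply Finset.sum_le_sum
  intro i _
  have h1 := Aa_pos (hs i) a θ
  have h2 := Ba_pos (hs i) a
  have h3 := Aa_le_Ba (hs i) a θ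
  have hsi := hs i
  have hB3 : (s i ^ 2 + a ^ 2) ^ (-(3/2) : ℝ) = (Ba (s i) a ^ 3)⁻¹ := by
    rw [rpow_neg_three_halvesX _ (by positivity)]
    rfl
  rw [hB3, show m i * (Ba (s i) a ^ 3)⁻¹ = 2 * m i / (Ba (s i) a * Ba (s i) a * (Ba (s i) a + Ba (s i) a)) by
    field_simp; ring]
  apply div_le_div_of_nonneg_left (by linarith [(hm i).le]) _ _
  · positivity
  · have : Aa (s i) a θ * Ba (s i) a * (Aa (s i) a θ + Ba (s i) a)
        ≤ Ba (s i) a * Ba (s i) a * (Ba (s i) a + Ba (s i) a) := by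
      apply mul_le_mul _ (by linarith) (by positivity) (by positivity)
      nlinarith
    linarith

lemma Phi2_le_big (hm : ∀ i, 0 < m i) (hs : ∀ i, 0 < s i) {a : ℝ} (ha : 0 < a) (θ : ℝ) :
    Phi2 m s a θ ≤ 2 * (∑ i, m i / s i) / a ^ 2 := by
  rw [Finset.mul_sum, Finset.sum_div]
  apply Finset.sum_le_sum
  intro i _
  have h1 := Aa_pos (hs i) a θ
  have h2 := Ba_pos (hs i) a
  have h3 := Aa_ge (hs i) a θ
  have h4 := Ba_ge_a (hs i) ha.le
  have hsi := hs i
  rw [show 2 * (m i / s i) / a ^ 2 = 2 * m i / (s i * a * a) by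
    rw [div_eq_div_iff (by positivity) (by positivity)]; field_simp]
  apply div_le_div_of_nonneg_left (by linarith [(hm i).le]) (by positivity)
  have c1 : s i * a * a ≤ Aa (s i) a θ * a * a :=
    mul_le_mul_of_nonneg_right (mul_le_mul_of_nonneg_right h3 ha.le) ha.le
  have c2 : Aa (s i) a θ * a * a ≤ Aa (s i) a θ * Ba (s i) a * a :=
    mul_le_mul_of_nonneg_right (mul_le_mul_of_nonneg_left h4 h1.le) ha.le
  have c3 : Aa (s i) a θ * Ba (s i) a * a ≤ Aa (s i) a θ * Ba (s i) a * (Aa (s i) a θ + Ba (s i) a) := by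
    apply mul_le_mul_of_nonneg_left (by linarith) (by positivity)
  linarith

lemma Phi_pos (hn : 1 ≤ n) (hm : ∀ i, 0 < m i) (hs : ∀ i, 0 < s i) (a θ : ℝ) :
    0 < Phi m s a θ := Real.sqrt_pos.2 (Phi2_pos m s hn hm hs a θ)

lemma Phi_le_sqrt_mu (hm : ∀ i, 0 < m i) (hs : ∀ i, 0 < s i) (a θ : ℝ) :
    Phi m s a θ ≤ Real.sqrt (∑ i, m i / s i ^ 3) :=
  Real.sqrt_le_sqrt (Phi2_le_mu m s hm hs a θ)

lemma Phi_ge_sqrt (hm : ∀ i, 0 < m i) (hs : ∀ i, 0 < s i) (a θ : ℝ) :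
    Real.sqrt (∑ i, m i * (s i ^ 2 + a ^ 2) ^ (-(3/2) : ℝ)) ≤ Phi m s a θ :=
  Real.sqrt_le_sqrt (Phi2_ge m s hm hs a θ)

lemma Phi2_contPair (hs : ∀ i, 0 < s i) :
    Continuous (fun p : ℝ × ℝ => Phi2 m s p.1 p.2) := by
  apply continuous_finset_sum
  intro i _
  have hA : Continuous (fun p : ℝ × ℝ => Aa (s i) p.1 p.2) := by
    apply Real.continuous_sqrt.comp
    fun_prop
  have hB : Continuous (fun p : ℝ × ℝ => Ba (s i) p.1) := by
    apply Real.continuous_sqrt.comp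
    fun_prop
  apply Continuous.div continuous_const
  · exact (hA.mul hB).mul (hA.add hB)
  · intro p
    have h1 := Aa_pos (hs i) p.1 p.2
    have h2 := Ba_pos (hs i) p.1
    positivity

end Bounds

section DerivTheta

variable {n : ℕ} (m s : Fin n → ℝ)

/-- derivative of `Aa` in `θ` -/
lemma Aa_hasDerivAt {si : ℝ} (hsi : 0 < si) (a θ : ℝ) :
    HasDerivAt (fun ψ => Aa si a ψ)
      (a ^ 2 * Real.sin θ * Real.cos θ / Aa si a θ) θ := by
  have hw : HasDerivAt (fun ψ => si ^ 2 + a ^ 2 * Real.sin ψ ^ 2)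
      (a ^ 2 * (2 * Real.sin θ ^ 1 * Real.cos θ)) θ :=
    (((Real.hasDerivAt_sin θ).pow 2).const_mul (a ^ 2)).const_add (si ^ 2)
  have hwpos : 0 < si ^ 2 + a ^ 2 * Real.sin θ ^ 2 := by positivity
  have h := hw.sqrt hwpos.ne'
  refine h.congr_deriv ?_
  rw [show Real.sqrt (si ^ 2 + a ^ 2 * Real.sin θ ^ 2) = Aa si a θ from rfl]
  have hA := Aa_pos hsi a θ
  field_simp

/-- the θ-derivative of one summand of `Phi2` -/
noncomputable def PdTerm (si mi a θ : ℝ) : ℝ :=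
  -(2 * mi * (a ^ 2 * Real.sin θ * Real.cos θ / Aa si a θ * Ba si a * (Aa si a θ + Ba si a)
      + Aa si a θ * Ba si a * (a ^ 2 * Real.sin θ * Real.cos θ / Aa si a θ)))
    / (Aa si a θ * Ba si a * (Aa si a θ + Ba si a)) ^ 2

noncomputable def Pd {n : ℕ} (m s : Fin n → ℝ) (a θ : ℝ) : ℝ := ∑ i, PdTerm (s i) (m i) a θ

lemma Phi2_hasDerivAt (hs : ∀ i, 0 < s i) (a θ : ℝ) :
    HasDerivAt (fun ψ => Phi2 m s a ψ) (Pd m s a θ) θ := by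
  apply HasDerivAt.fun_sum
  intro i _
  have hA := Aa_pos (hs i) a θ
  have hB := Ba_pos (hs i) a
  have hAd := Aa_hasDerivAt (hs i) a θ
  have hgd : HasDerivAt (fun ψ => Aa (s i) a ψ * Ba (s i) a * (Aa (s i) a ψ + Ba (s i) a))
      (a ^ 2 * Real.sin θ * Real.cos θ / Aa (s i) a θ * Ba (s i) a * (Aa (s i) a θ + Ba (s i) a)
        + Aa (s i) a θ * Ba (s i) a * (a ^ 2 * Real.sin θ * Real.cos θ / Aa (s i) a θ)) θ := by
    have h1 := (hAd.mul_const (Ba (s i) a)).mul (hAd.add_const (Ba (s i) a))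
    refine h1.congr_deriv ?_
    try ring
  have hgne : Aa (s i) a θ * Ba (s i) a * (Aa (s i) a θ + Ba (s i) a) ≠ 0 := by positivity
  have h2 := (hasDerivAt_const θ (2 * m i)).div hgd hgne
  refine h2.congr_deriv ?_
  rw [PdTerm]
  have h9 : (0:ℝ) * (Aa (s i) a θ * Ba (s i) a * (Aa (s i) a θ + Ba (s i) a)) = 0 := by ring
  field_simp
  try ring

lemma Phi_hasDerivAt (hn : 1 ≤ n) (hm : ∀ i, 0 < m i) (hs : ∀ i, 0 < s i) (a θ : ℝ) :
    HasDerivAt (fun ψ => Phi m s a ψ)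
      (Pd m s a θ / (2 * Phi m s a θ)) θ := by
  have h := (Phi2_hasDerivAt m s hs a θ).sqrt (Phi2_pos m s hn hm hs a θ).ne'
  exact h

/-- The main pointwise identity: the candidate solution satisfies the Sitnikov ODE. -/
lemma key_identity (hn : 1 ≤ n) (hm : ∀ i, 0 < m i) (hs : ∀ i, 0 < s i) (a θ : ℝ) :
    Phi m s a θ * (a * Real.cos θ * (Pd m s a θ / (2 * Phi m s a θ))
        + -(a * Real.sin θ) * Phi m s a θ)
      = -∑ i, m i * (a * Real.sin θ)
          / (s i ^ 2 + (a * Real.sin θ) ^ 2) ^ ((3 : ℝ) / 2) := by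
  have hP2 := Phi2_pos m s hn hm hs a θ
  have hP := Phi_pos m s hn hm hs a θ
  have hPsq : Phi m s a θ * Phi m s a θ = Phi2 m s a θ :=
    Real.mul_self_sqrt hP2.le
  have lhs_eq : Phi m s a θ * (a * Real.cos θ * (Pd m s a θ / (2 * Phi m s a θ))
      + -(a * Real.sin θ) * Phi m s a θ)
      = a * Real.cos θ * Pd m s a θ / 2 - a * Real.sin θ * Phi2 m s a θ := by
    rw [← hPsq]
    field_simp
    ring
  rw [lhs_eq, Pd, Phi2, Finset.mul_sum, Finset.mul_sum, Finset.sum_div, ← Finset.sum_sub_distrib,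
    ← Finset.sum_neg_distrib]
  refine Finset.sum_congr rfl fun i _ => ?_
  have hA := Aa_pos (hs i) a θ
  have hB := Ba_pos (hs i) a
  have hA2 : Aa (s i) a θ ^ 2 = s i ^ 2 + a ^ 2 * Real.sin θ ^ 2 :=
    Real.sq_sqrt (by positivity)
  have hB2 : Ba (s i) a ^ 2 = s i ^ 2 + a ^ 2 :=
    Real.sq_sqrt (by positivity)
  have hy2 : a ^ 2 * Real.cos θ ^ 2 = Ba (s i) a ^ 2 - Aa (s i) a θ ^ 2 := by
    rw [hA2, hB2]
    have := Real.sin_sq_add_cos_sq θ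
    nlinarith
  have hrpow : (s i ^ 2 + (a * Real.sin θ) ^ 2) ^ ((3 : ℝ) / 2) = Aa (s i) a θ ^ 3 := by
    rw [rpow_three_halvesX _ (by positivity), show (a * Real.sin θ) ^ 2 = a ^ 2 * Real.sin θ ^ 2 by ring]
    rfl
  rw [hrpow, PdTerm]
  -- reduce to an algebraic identity
  have e1 : a * Real.cos θ * (-(2 * m i * (a ^ 2 * Real.sin θ * Real.cos θ / Aa (s i) a θ * Ba (s i) a * (Aa (s i) a θ + Ba (s i) a)
      + Aa (s i) a θ * Ba (s i) a * (a ^ 2 * Real.sin θ * Real.cos θ / Aa (s i) a θ)))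
    / (Aa (s i) a θ * Ba (s i) a * (Aa (s i) a θ + Ba (s i) a)) ^ 2) / 2
      = -(m i * (a * Real.sin θ) * ((a ^ 2 * Real.cos θ ^ 2) * (2 * Aa (s i) a θ * Ba (s i) a + Ba (s i) a ^ 2))
          / (Aa (s i) a θ ^ 3 * Ba (s i) a ^ 2 * (Aa (s i) a θ + Ba (s i) a) ^ 2)) := by
    field_simp
    ring
  rw [e1, hy2]
  field_simp
  ring

end DerivTheta

noncomputable def Gmap {n : ℕ} (m s : Fin n → ℝ) (a θ : ℝ) : ℝ :=
  ∫ ψ in (0:ℝ)..θ, (Phi m s a ψ)⁻¹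

noncomputable def Th {n : ℕ} (m s : Fin n → ℝ) (a : ℝ) : ℝ → ℝ :=
  Function.invFun (Gmap m s a)

section TimeMap

variable {n : ℕ} (m s : Fin n → ℝ)

set_option maxHeartbeats 1000000 in
lemma Phi_contPair (hs : ∀ i, 0 < s i) :
    Continuous (fun p : ℝ × ℝ => Phi m s p.1 p.2) := by
  unfold Phi
  exact (Phi2_contPair m s hs).sqrt

set_option maxHeartbeats 1000000 in
lemma PhiInv_contPair (hs : ∀ i, 0 < s i) (hn : 1 ≤ n) (hm : ∀ i, 0 < m i) :
    Continuous (fun p : ℝ × ℝ => (Phi m s p.1 p.2)⁻¹) :=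
  (Phi_contPair m s hs).inv₀ fun p => (Phi_pos m s hn hm hs p.1 p.2).ne'

set_option maxHeartbeats 1000000 in
lemma Phi2_cont (hs : ∀ i, 0 < s i) (a : ℝ) : Continuous (fun ψ => Phi2 m s a ψ) := by
  apply continuous_finset_sum
  intro i _
  have hA : Continuous (fun ψ : ℝ => Aa (s i) a ψ) := by
    apply Real.continuous_sqrt.comp
    fun_prop
  apply Continuous.div continuous_const
  · exact (hA.mul continuous_const).mul (hA.add continuous_const)
  · intro ψ
    have h1 := Aa_pos (hs i) a ψ
    have h2 := Ba_pos (hs i) a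
    positivity

lemma Phi_cont (hs : ∀ i, 0 < s i) (a : ℝ) : Continuous (fun ψ => Phi m s a ψ) := by
  unfold Phi
  exact (Phi2_cont m s hs a).sqrt

set_option maxHeartbeats 1000000 in
lemma PhiInv_cont (hn : 1 ≤ n) (hm : ∀ i, 0 < m i) (hs : ∀ i, 0 < s i) (a : ℝ) :
    Continuous (fun ψ => (Phi m s a ψ)⁻¹) :=
  (Phi_cont m s hs a).inv₀ fun ψ => (Phi_pos m s hn hm hs a ψ).ne'

lemma Gmap_hasStrictDerivAt (hn : 1 ≤ n) (hm : ∀ i, 0 < m i) (hs : ∀ i, 0 < s i) (a θ : ℝ) :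
    HasStrictDerivAt (fun ψ => Gmap m s a ψ) (Phi m s a θ)⁻¹ θ := by
  apply intervalIntegral.integral_hasStrictDerivAt_right
    (((PhiInv_cont m s hn hm hs a)).intervalIntegrable _ _)
    ((PhiInv_cont m s hn hm hs a).stronglyMeasurableAtFilter _ _)
    (PhiInv_cont m s hn hm hs a).continuousAt

lemma Gmap_mono (hn : 1 ≤ n) (hm : ∀ i, 0 < m i) (hs : ∀ i, 0 < s i) (a : ℝ) :
    StrictMono (fun ψ => Gmap m s a ψ) := by
  apply strictMono_of_deriv_pos
  intro θ
  rw [(Gmap_hasStrictDerivAt m s hn hm hs a θ).hasDerivAt.deriv]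
  exact inv_pos.2 (Phi_pos m s hn hm hs a θ)

lemma Gmap_cont (hn : 1 ≤ n) (hm : ∀ i, 0 < m i) (hs : ∀ i, 0 < s i) (a : ℝ) :
    Continuous (fun ψ => Gmap m s a ψ) := by
  rw [continuous_iff_continuousAt]
  exact fun θ => (Gmap_hasStrictDerivAt m s hn hm hs a θ).hasDerivAt.continuousAt

lemma Gmap_zero (a : ℝ) : Gmap m s a 0 = 0 := intervalIntegral.integral_same

lemma Gmap_low (hn : 1 ≤ n) (hm : ∀ i, 0 < m i) (hs : ∀ i, 0 < s i) (a : ℝ)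
    {θ : ℝ} (hθ : 0 ≤ θ) :
    θ * (Real.sqrt (∑ i, m i / s i ^ 3))⁻¹ ≤ Gmap m s a θ := by
  have : Nonempty (Fin n) := ⟨⟨0, hn⟩⟩
  have hμ : 0 < ∑ i, m i / s i ^ 3 :=
    Finset.sum_pos (fun i _ => div_pos (hm i) (pow_pos (hs i) 3)) Finset.univ_nonempty
  have hsμ : 0 < Real.sqrt (∑ i, m i / s i ^ 3) := Real.sqrt_pos.2 hμ
  have h1 : ∀ ψ ∈ Icc (0:ℝ) θ, (Real.sqrt (∑ i, m i / s i ^ 3))⁻¹ ≤ (Phi m s a ψ)⁻¹ :=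
    fun ψ _ => inv_anti₀ (Phi_pos m s hn hm hs a ψ) (Phi_le_sqrt_mu m s hm hs a ψ)
  have h2 := intervalIntegral.integral_mono_on (μ := volume) hθ
    intervalIntegrable_const
    ((PhiInv_cont m s hn hm hs a).intervalIntegrable _ _) h1
  rw [intervalIntegral.integral_const] at h2
  rw [smul_eq_mul, sub_zero] at h2
  exact h2

lemma Gmap_high (hn : 1 ≤ n) (hm : ∀ i, 0 < m i) (hs : ∀ i, 0 < s i) (a : ℝ)
    {θ : ℝ} (hθ : θ ≤ 0) :
    Gmap m s a θ ≤ θ * (Real.sqrt (∑ i, m i / s i ^ 3))⁻¹ := by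
  have : Nonempty (Fin n) := ⟨⟨0, hn⟩⟩
  have h1 : ∀ ψ ∈ Icc θ (0:ℝ), (Real.sqrt (∑ i, m i / s i ^ 3))⁻¹ ≤ (Phi m s a ψ)⁻¹ :=
    fun ψ _ => inv_anti₀ (Phi_pos m s hn hm hs a ψ) (Phi_le_sqrt_mu m s hm hs a ψ)
  have h2 := intervalIntegral.integral_mono_on (μ := volume) hθ
    intervalIntegrable_const
    ((PhiInv_cont m s hn hm hs a).intervalIntegrable _ _) h1
  rw [intervalIntegral.integral_const] at h2
  have h3 : Gmap m s a θ = -∫ ψ in θ..(0:ℝ), (Phi m s a ψ)⁻¹ := by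
    rw [Gmap, intervalIntegral.integral_symm]
  rw [h3]
  have : (0 - θ) • (Real.sqrt (∑ i, m i / s i ^ 3))⁻¹
      ≤ ∫ ψ in θ..(0:ℝ), (Phi m s a ψ)⁻¹ := h2
  rw [smul_eq_mul] at this
  nlinarith [this]

lemma Gmap_surj (hn : 1 ≤ n) (hm : ∀ i, 0 < m i) (hs : ∀ i, 0 < s i) (a : ℝ) :
    Function.Surjective (fun ψ => Gmap m s a ψ) := by
  have : Nonempty (Fin n) := ⟨⟨0, hn⟩⟩
  have hμ : 0 < ∑ i, m i / s i ^ 3 :=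
    Finset.sum_pos (fun i _ => div_pos (hm i) (pow_pos (hs i) 3)) Finset.univ_nonempty
  have hsμ : 0 < Real.sqrt (∑ i, m i / s i ^ 3) := Real.sqrt_pos.2 hμ
  intro y
  rcases le_total 0 y with hy | hy
  · set Θ : ℝ := Real.sqrt (∑ i, m i / s i ^ 3) * (y + 1) with hΘ
    have hΘpos : 0 ≤ Θ := by positivity
    have h1 : y + 1 ≤ Gmap m s a Θ := by
      have := Gmap_low m s hn hm hs a hΘpos
      rw [hΘ] at this ⊢
      calc y + 1 = Real.sqrt (∑ i, m i / s i ^ 3) * (y + 1)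
            * (Real.sqrt (∑ i, m i / s i ^ 3))⁻¹ := by field_simp
        _ ≤ Gmap m s a (Real.sqrt (∑ i, m i / s i ^ 3) * (y + 1)) := this
    have h0 : Gmap m s a 0 = 0 := Gmap_zero m s a
    obtain ⟨x, _, hx⟩ := intermediate_value_Icc hΘpos
      (Gmap_cont m s hn hm hs a).continuousOn
      (show y ∈ Icc (Gmap m s a 0) (Gmap m s a Θ) by
        rw [h0]; exact ⟨hy, by linarith⟩)
    exact ⟨x, hx⟩
  · set Θ : ℝ := Real.sqrt (∑ i, m i / s i ^ 3) * (y - 1) with hΘ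
    have hΘneg : Θ ≤ 0 := by
      rw [hΘ]
      apply mul_nonpos_of_nonneg_of_nonpos hsμ.le
      linarith
    have h1 : Gmap m s a Θ ≤ y - 1 := by
      have := Gmap_high m s hn hm hs a hΘneg
      calc Gmap m s a Θ ≤ Θ * (Real.sqrt (∑ i, m i / s i ^ 3))⁻¹ := this
        _ = y - 1 := by rw [hΘ]; field_simp
    have h0 : Gmap m s a 0 = 0 := Gmap_zero m s a
    obtain ⟨x, _, hx⟩ := intermediate_value_Icc hΘneg
      (Gmap_cont m s hn hm hs a).continuousOn
      (show y ∈ Icc (Gmap m s a Θ) (Gmap m s a 0) by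
        rw [h0]; exact ⟨by linarith, hy⟩)
    exact ⟨x, hx⟩

section ThProps

variable (hn : 1 ≤ n) (hm : ∀ i, 0 < m i) (hs : ∀ i, 0 < s i) (a : ℝ)

include hn hm hs

lemma Th_rightInv : ∀ y, Gmap m s a (Th m s a y) = y :=
  Function.rightInverse_invFun (Gmap_surj m s hn hm hs a)

lemma Th_leftInv : ∀ θ, Th m s a (Gmap m s a θ) = θ :=
  Function.leftInverse_invFun (Gmap_mono m s hn hm hs a).injective

lemma Th_cont : Continuous (Th m s a) := by
  apply Monotone.continuous_of_surjective
  · intro y₁ y₂ h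
    have := Th_rightInv m s hn hm hs a
    by_contra hc
    push_neg at hc
    have h2 := (Gmap_mono m s hn hm hs a) hc
    change Gmap m s a (Th m s a y₂) < Gmap m s a (Th m s a y₁) at h2
    rw [this y₂, this y₁] at h2
    linarith
  · intro θ
    exact ⟨Gmap m s a θ, Th_leftInv m s hn hm hs a θ⟩

lemma Th_hasDerivAt (t : ℝ) :
    HasDerivAt (Th m s a) (Phi m s a (Th m s a t)) t := by
  have h := HasDerivAt.of_local_left_inverse
    ((Th_cont m s hn hm hs a).continuousAt)
    (Gmap_hasStrictDerivAt m s hn hm hs a (Th m s a t)).hasDerivAt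
    (inv_ne_zero (Phi_pos m s hn hm hs a (Th m s a t)).ne')
    (Filter.Eventually.of_forall (Th_rightInv m s hn hm hs a))
  rwa [inv_inv] at h

omit hn hm hs in
lemma Phi_per (θ : ℝ) : Phi m s a (θ + 2 * Real.pi) = Phi m s a θ := by
  unfold Phi Phi2 Aa
  simp [Real.sin_add_two_pi]

lemma Gmap_add (θ : ℝ) :
    Gmap m s a (θ + 2 * Real.pi) = Gmap m s a θ + Gmap m s a (2 * Real.pi) := by
  have hint : ∀ u v : ℝ, IntervalIntegrable (fun ψ => (Phi m s a ψ)⁻¹) volume u v :=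
    fun u v => (PhiInv_cont m s hn hm hs a).intervalIntegrable _ _
  have h1 : (∫ ψ in (0:ℝ)..(2*Real.pi), (Phi m s a ψ)⁻¹)
        + (∫ ψ in (2*Real.pi)..(θ + 2*Real.pi), (Phi m s a ψ)⁻¹)
      = ∫ ψ in (0:ℝ)..(θ + 2*Real.pi), (Phi m s a ψ)⁻¹ :=
    intervalIntegral.integral_add_adjacent_intervals (hint _ _) (hint _ _)
  have h2 : (∫ ψ in (2*Real.pi)..(θ + 2*Real.pi), (Phi m s a ψ)⁻¹)
      = ∫ ψ in (0:ℝ)..θ, (Phi m s a ψ)⁻¹ := by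
    have h3 : (∫ ψ in (0:ℝ)..θ, (fun x => (Phi m s a x)⁻¹) (ψ + 2*Real.pi))
        = ∫ ψ in ((0:ℝ)+2*Real.pi)..(θ+2*Real.pi), (Phi m s a ψ)⁻¹ :=
      intervalIntegral.integral_comp_add_right (fun x => (Phi m s a x)⁻¹) (2*Real.pi)
    rw [show (0:ℝ) + 2*Real.pi = 2*Real.pi by ring] at h3
    rw [← h3]
    apply intervalIntegral.integral_congr
    intro ψ _
    simp only
    rw [Phi_per]
  show (∫ ψ in (0:ℝ)..(θ + 2*Real.pi), (Phi m s a ψ)⁻¹)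
      = (∫ ψ in (0:ℝ)..θ, (Phi m s a ψ)⁻¹) + ∫ ψ in (0:ℝ)..(2*Real.pi), (Phi m s a ψ)⁻¹
  rw [← h1, h2]
  ring

lemma Th_per (t : ℝ) :
    Th m s a (t + Gmap m s a (2 * Real.pi)) = Th m s a t + 2 * Real.pi := by
  apply (Gmap_mono m s hn hm hs a).injective
  show Gmap m s a _ = Gmap m s a _
  rw [Th_rightInv m s hn hm hs a, Gmap_add m s hn hm hs a, Th_rightInv m s hn hm hs a]

end ThProps

end TimeMap

section Period

variable {n : ℕ} (m s : Fin n → ℝ)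

lemma Per_cont (hn : 1 ≤ n) (hm : ∀ i, 0 < m i) (hs : ∀ i, 0 < s i) :
    Continuous (fun a => Gmap m s a (2 * Real.pi)) := by
  unfold Gmap
  exact intervalIntegral.continuous_parametric_intervalIntegral_of_continuous'
    (f := fun a ψ => (Phi m s a ψ)⁻¹) (μ := MeasureTheory.volume)
    (show Continuous (Function.uncurry fun a ψ => (Phi m s a ψ)⁻¹) from
      PhiInv_contPair m s hs hn hm) 0 (2 * Real.pi)

lemma haux_pos (hn : 1 ≤ n) (hm : ∀ i, 0 < m i) (hs : ∀ i, 0 < s i) (a : ℝ) :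
    0 < ∑ i, m i * (s i ^ 2 + a ^ 2) ^ (-(3/2) : ℝ) := by
  have : Nonempty (Fin n) := ⟨⟨0, hn⟩⟩
  apply Finset.sum_pos _ Finset.univ_nonempty
  intro i _
  have := hs i
  exact mul_pos (hm i) (Real.rpow_pos_of_pos (by positivity) _)

lemma Per_ub (hn : 1 ≤ n) (hm : ∀ i, 0 < m i) (hs : ∀ i, 0 < s i) (a : ℝ) :
    Gmap m s a (2 * Real.pi)
      ≤ 2 * Real.pi * (Real.sqrt (∑ i, m i * (s i ^ 2 + a ^ 2) ^ (-(3/2) : ℝ)))⁻¹ := by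
  have hx := haux_pos m s hn hm hs a
  have hsx : 0 < Real.sqrt (∑ i, m i * (s i ^ 2 + a ^ 2) ^ (-(3/2) : ℝ)) := Real.sqrt_pos.2 hx
  have h1 : ∀ ψ ∈ Icc (0:ℝ) (2 * Real.pi),
      (Phi m s a ψ)⁻¹ ≤ (Real.sqrt (∑ i, m i * (s i ^ 2 + a ^ 2) ^ (-(3/2) : ℝ)))⁻¹ :=
    fun ψ _ => inv_anti₀ hsx (Phi_ge_sqrt m s hm hs a ψ)
  have h2 := intervalIntegral.integral_mono_on (μ := MeasureTheory.volume)
    (by positivity : (0:ℝ) ≤ 2 * Real.pi)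
    ((PhiInv_cont m s hn hm hs a).intervalIntegrable _ _)
    intervalIntegrable_const h1
  rw [intervalIntegral.integral_const] at h2
  calc Gmap m s a (2 * Real.pi) ≤ (2 * Real.pi - 0)
      • (Real.sqrt (∑ i, m i * (s i ^ 2 + a ^ 2) ^ (-(3/2) : ℝ)))⁻¹ := h2
    _ = 2 * Real.pi * (Real.sqrt (∑ i, m i * (s i ^ 2 + a ^ 2) ^ (-(3/2) : ℝ)))⁻¹ := by
        rw [smul_eq_mul]; ring

lemma Per_lb (hn : 1 ≤ n) (hm : ∀ i, 0 < m i) (hs : ∀ i, 0 < s i) {a : ℝ} (ha : 0 < a) :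
    2 * Real.pi * (Real.sqrt (2 * ∑ i, m i / s i) / a)⁻¹ ≤ Gmap m s a (2 * Real.pi) := by
  have : Nonempty (Fin n) := ⟨⟨0, hn⟩⟩
  have hM : 0 < ∑ i, m i / s i :=
    Finset.sum_pos (fun i _ => div_pos (hm i) (hs i)) Finset.univ_nonempty
  have hs2M : 0 < Real.sqrt (2 * ∑ i, m i / s i) := Real.sqrt_pos.2 (by linarith)
  have hPhile : ∀ ψ, Phi m s a ψ ≤ Real.sqrt (2 * ∑ i, m i / s i) / a := by
    intro ψ
    have h1 : Phi2 m s a ψ ≤ 2 * (∑ i, m i / s i) / a ^ 2 := Phi2_le_big m s hm hs ha ψ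
    have h2 : Phi m s a ψ ≤ Real.sqrt (2 * (∑ i, m i / s i) / a ^ 2) := Real.sqrt_le_sqrt h1
    rwa [Real.sqrt_div' _ (by positivity), Real.sqrt_sq ha.le] at h2
  have h1 : ∀ ψ ∈ Icc (0:ℝ) (2 * Real.pi),
      (Real.sqrt (2 * ∑ i, m i / s i) / a)⁻¹ ≤ (Phi m s a ψ)⁻¹ := by
    intro ψ _
    exact inv_anti₀ (Phi_pos m s hn hm hs a ψ) (hPhile ψ)
  have h2 := intervalIntegral.integral_mono_on (μ := MeasureTheory.volume)
    (by positivity : (0:ℝ) ≤ 2 * Real.pi)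
    intervalIntegrable_const
    ((PhiInv_cont m s hn hm hs a).intervalIntegrable _ _) h1
  rw [intervalIntegral.integral_const] at h2
  calc 2 * Real.pi * (Real.sqrt (2 * ∑ i, m i / s i) / a)⁻¹
      = (2 * Real.pi - 0) • (Real.sqrt (2 * ∑ i, m i / s i) / a)⁻¹ := by
        rw [smul_eq_mul]; ring
    _ ≤ Gmap m s a (2 * Real.pi) := h2

lemma partC {n : ℕ} (hn : 1 ≤ n) (m s : Fin n → ℝ) (hm : ∀ i, 0 < m i)
    (hs : ∀ i, 0 < s i) (lam : ℝ) (hlam : 0 < lam)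
    (c : ℝ) (hc : 0 < c)
    (hceq : ∑ i, m i * (s i ^ 2 + c ^ 2) ^ (-(3 / 2) : ℝ) = lam) :
    ∃ z : ℝ → ℝ, Differentiable ℝ z ∧ Differentiable ℝ (deriv z) ∧
      (∀ t : ℝ, deriv (deriv z) t =
        -∑ i, m i * z t / (s i ^ 2 + z t ^ 2) ^ ((3 : ℝ) / 2)) ∧
      (∃ t₁ t₂ : ℝ, z t₁ ≠ z t₂) ∧
      (∀ t : ℝ, z (t + 2 * Real.pi / Real.sqrt lam) = z t) := by
  have : Nonempty (Fin n) := ⟨⟨0, hn⟩⟩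
  have hπ := Real.pi_pos
  have hslam : 0 < Real.sqrt lam := Real.sqrt_pos.2 hlam
  have hM : 0 < ∑ i, m i / s i :=
    Finset.sum_pos (fun i _ => div_pos (hm i) (hs i)) Finset.univ_nonempty
  have hs2M : 0 < Real.sqrt (2 * ∑ i, m i / s i) := Real.sqrt_pos.2 (by linarith)
  set T : ℝ := 2 * Real.pi / Real.sqrt lam with hTdef
  set K : ℝ := max c (Real.sqrt (2 * ∑ i, m i / s i) / Real.sqrt lam) + 1 with hKdef
  have hcK : c < K := by
    have := le_max_left c (Real.sqrt (2 * ∑ i, m i / s i) / Real.sqrt lam)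
    rw [hKdef]; linarith
  have hK0 : 0 < K := lt_trans hc hcK
  -- value at c
  have hPc : Gmap m s c (2 * Real.pi) ≤ T := by
    have := Per_ub m s hn hm hs c
    rw [show (-(3/2) : ℝ) = (-(3/2) : ℝ) from rfl, hceq] at this
    rw [hTdef, div_eq_mul_inv]
    exact this
  -- value at K
  have hPK : T < Gmap m s K (2 * Real.pi) := by
    have hlb := Per_lb m s hn hm hs hK0
    have hKgt : Real.sqrt (2 * ∑ i, m i / s i) / Real.sqrt lam < K := by
      have := le_max_right c (Real.sqrt (2 * ∑ i, m i / s i) / Real.sqrt lam)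
      rw [hKdef]; linarith
    have hd : Real.sqrt (2 * ∑ i, m i / s i) / K < Real.sqrt lam := by
      rw [div_lt_iff₀ hslam] at hKgt
      rw [div_lt_iff₀ hK0]
      nlinarith
    have h1 : T < 2 * Real.pi * (Real.sqrt (2 * ∑ i, m i / s i) / K)⁻¹ := by
      rw [hTdef, div_eq_mul_inv]
      apply mul_lt_mul_of_pos_left _ (by linarith)
      exact inv_strictAnti₀ (by positivity) hd
    linarith
  -- IVT to find amplitude a
  obtain ⟨a, hamem, haP⟩ := intermediate_value_Icc hcK.le
    ((Per_cont m s hn hm hs).continuousOn) (⟨hPc, hPK.le⟩ : T ∈ Icc _ _)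
  have ha : 0 < a := lt_of_lt_of_le hc hamem.1
  change Gmap m s a (2 * Real.pi) = T at haP
  -- the solution
  set za : ℝ → ℝ := fun t => a * Real.sin (Th m s a t) with hza
  have hThd : ∀ t, HasDerivAt (Th m s a) (Phi m s a (Th m s a t)) t :=
    fun t => Th_hasDerivAt m s hn hm hs a t
  have hzd : ∀ t, HasDerivAt za
      (a * Real.cos (Th m s a t) * Phi m s a (Th m s a t)) t := by
    intro t
    have h1 := ((Real.hasDerivAt_sin (Th m s a t)).comp t (hThd t)).const_mul a
    refine h1.congr_deriv ?_
    ring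
  have hz : Differentiable ℝ za := fun t => (hzd t).differentiableAt
  have hdz : deriv za = fun t => a * Real.cos (Th m s a t) * Phi m s a (Th m s a t) :=
    funext fun t => (hzd t).deriv
  have hF : ∀ ψ : ℝ, HasDerivAt (fun θ => a * Real.cos θ * Phi m s a θ)
      (a * -Real.sin ψ * Phi m s a ψ
        + a * Real.cos ψ * (Pd m s a ψ / (2 * Phi m s a ψ))) ψ :=
    fun ψ => ((Real.hasDerivAt_cos ψ).const_mul a).mul (Phi_hasDerivAt m s hn hm hs a ψ)
  have hzdd : ∀ t, HasDerivAt (fun t => a * Real.cos (Th m s a t) * Phi m s a (Th m s a t))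
      ((a * -Real.sin (Th m s a t) * Phi m s a (Th m s a t)
        + a * Real.cos (Th m s a t) * (Pd m s a (Th m s a t) / (2 * Phi m s a (Th m s a t))))
        * Phi m s a (Th m s a t)) t := by
    intro t
    exact HasDerivAt.comp t (hF (Th m s a t)) (hThd t)
  have hz' : Differentiable ℝ (deriv za) := by
    rw [hdz]; exact fun t => (hzdd t).differentiableAt
  have hODE : ∀ t, deriv (deriv za) t =
      -∑ i, m i * za t / (s i ^ 2 + za t ^ 2) ^ ((3:ℝ)/2) := by
    intro t
    rw [hdz, (hzdd t).deriv]
    simp only [hza]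
    have hk := key_identity m s hn hm hs a (Th m s a t)
    rw [← hk]
    ring
  have hper : ∀ t, za (t + T) = za t := by
    intro t
    simp only [hza]
    rw [show t + T = t + Gmap m s a (2 * Real.pi) by rw [haP],
      Th_per m s hn hm hs a t, Real.sin_add_two_pi]
  have hTh0 : Th m s a 0 = 0 := by
    have := Th_leftInv m s hn hm hs a 0
    rwa [Gmap_zero] at this
  have h5 : za (Gmap m s a (Real.pi/2)) = a := by
    simp only [hza]
    rw [Th_leftInv m s hn hm hs a, Real.sin_pi_div_two, mul_one]
  have h6 : za 0 = 0 := by simp [hza, hTh0]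
  exact ⟨za, hz, hz', hODE, ⟨Gmap m s a (Real.pi/2), 0, by
    rw [h5, h6]; exact ne_of_gt ha⟩, hper⟩

end Period



end SitnikovAux


/-- For primaries in a rigid motion with angular velocity `√λ`, the
following are equivalent: (i) the Sitnikov equation has a nonconstant
solution of period `2π/√λ` (a synchronous solution); (ii) there is a height
`c > 0` with `∑ m_i (s_i² + c²)^{-3/2} = λ` (the pyramidal central
configuration condition); (iii) `λ < ∑ m_i/s_i³`. -/
theorem synchronous_iff_pyramidal_iff_lambda_lt
    (n : ℕ) (hn : 1 ≤ n) (m s : Fin n → ℝ)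
    (hm : ∀ i, 0 < m i) (hs : ∀ i, 0 < s i)
    (lam : ℝ) (hlam : 0 < lam) :
    ((∃ z : ℝ → ℝ, Differentiable ℝ z ∧ Differentiable ℝ (deriv z) ∧
        (∀ t : ℝ, deriv (deriv z) t =
          -∑ i, m i * z t / (s i ^ 2 + z t ^ 2) ^ ((3 : ℝ) / 2)) ∧
        (∃ t₁ t₂ : ℝ, z t₁ ≠ z t₂) ∧
        (∀ t : ℝ, z (t + 2 * Real.pi / Real.sqrt lam) = z t)) ↔
      (∃ c : ℝ, 0 < c ∧
        ∑ i, m i * (s i ^ 2 + c ^ 2) ^ (-(3 / 2) : ℝ) = lam)) ∧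
    ((∃ c : ℝ, 0 < c ∧
        ∑ i, m i * (s i ^ 2 + c ^ 2) ^ (-(3 / 2) : ℝ) = lam) ↔
      lam < ∑ i, m i / s i ^ 3) := by
  constructor
  · constructor
    · rintro ⟨z, hz, hz', hODE, hnc, hper⟩
      have hlt := SitnikovAux.partB hn m s hm hs lam hlam hz hz' hODE hnc hper
      obtain ⟨c, hc, hceq⟩ := (SitnikovAux.partA hn m s hm hs lam hlam).2 hlt
      exact ⟨c, hc, hceq⟩
    · rintro ⟨c, hc, hceq⟩
      exact SitnikovAux.partC hn m s hm hs lam hlam c hc hceq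
  · exact SitnikovAux.partA hn m s hm hs lam hlam
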